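/- For κ ∈ I_n let q_κ^{[i]} := (n,κ(n))∘(n−1,κ(n−1))∘⋯∘(i,κ(i)) ∈ S_n (composition with rightmost factor applied first; (j,j) is the identity). Then for arbitrary n×n matrices C_1,…,C_n over A, ⟨⟨C_1,…,C_n⟩⟩ = ∑_{κ∈I_n} α(κ)·P_{1,κ(1)}·P_{2,κ(2)}⋯P_{n,κ(n)}·C_1^(q_κ^{[1]}(1))·C_2^(q_κ^{[2]}(2))⋯C_n^(q_κ^{[n]}(n)), where q_κ^{[i]}(i) denotes the image of i under q_κ^{[i]}. -/

import Mathlib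

/-!
STATEMENT 9: With q_κ^{[i]} := (n,κ(n))∘(n−1,κ(n−1))∘⋯∘(i,κ(i)),
⟨⟨C_1,…,C_n⟩⟩ = ∑_{κ∈I_n} α(κ)·P_{1,κ(1)}⋯P_{n,κ(n)}·C_1^(q_κ^{[1]}(1))⋯C_n^(q_κ^{[n]}(n)).
The point `i : Fin n` carries the label `i+1 ∈ {1,…,n}`.
-/

noncomputable section

abbrev K : Type := RatFunc ℚ

def u : K := RatFunc.X

/-- Operators on the n-fold tensor power of K^n with coefficients in A. -/
abbrev Op (A : Type*) (n : ℕ) := Matrix (Fin n → Fin n) (Fin n → Fin n) A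

variable {A : Type*} [Ring A] [Algebra K A] {n : ℕ}

/-- `act C s` = C^(s): the matrix C acting on the s-th tensor factor. -/
def act (C : Matrix (Fin n) (Fin n) A) (s : Fin n) : Op A n :=
  fun f g => if ∀ t, t ≠ s → f t = g t then C (f s) (g s) else 0

/-- `Pop σ` = P_σ: permutation of the tensor factors according to σ. -/
def Pop (σ : Equiv.Perm (Fin n)) : Op A n :=
  fun f g => if f = g ∘ ⇑σ⁻¹ then (1 : A) else 0

/-- P_{ij} (with P_{ii} = Id). -/
def Pij (i j : Fin n) : Op A n := Pop (Equiv.swap i j)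

/-- Π_k = 1 − (2u−k−n+2)⁻¹ ∑_{i=k+1}^n P_{ki}, with label k+1. -/
def Piop (k : Fin n) : Op A n :=
  (1 : Op A n) -
    ((2 * u - ((k : ℕ) + 1 : K) - (n : K) + 2)⁻¹ : K) •
      ∑ i ∈ Finset.univ.filter (fun i => k < i), Pij k i

/-- ⟨⟨C_1,…,C_n⟩⟩ = C_1^(1)·Π_1·C_2^(2)·Π_2⋯Π_{n−1}·C_n^(n). -/
def braket (C : Fin n → Matrix (Fin n) (Fin n) A) : Op A n :=
  ((List.finRange n).map (fun s => act (C s) s * Piop s)).prod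

/-- I_n: the tuples κ with i ≤ κ(i) for all i. -/
def In (n : ℕ) : Finset (Fin n → Fin n) :=
  Finset.univ.filter (fun κ => ∀ i, i ≤ κ i)

/-- α(κ) = ∏_{i : i < κ(i)} (n−2u−2+i)⁻¹, with label i+1. -/
def alphaK (κ : Fin n → Fin n) : K :=
  ∏ i ∈ Finset.univ.filter (fun i => i < κ i), ((n : K) - 2 * u - 2 + ((i : ℕ) + 1 : K))⁻¹

/-- q_κ^{[i]} = (n,κ(n))∘(n−1,κ(n−1))∘⋯∘(i,κ(i)), rightmost factor applied first. -/
def qk (κ : Fin n → Fin n) (i : Fin n) : Equiv.Perm (Fin n) :=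
  ((((List.finRange n).filter (fun j => decide (i ≤ j))).reverse).map
    (fun j => Equiv.swap j (κ j))).prod

set_option linter.unusedSectionVars false
set_option linter.unusedVariables false
set_option linter.unusedTactic false
set_option maxRecDepth 8000

lemma comp_eq_iff (σ : Equiv.Perm (Fin n)) (f h : Fin n → Fin n) :
    f = h ∘ ⇑σ⁻¹ ↔ h = f ∘ ⇑σ := by
  constructor <;> rintro rfl <;> funext t <;> simp

lemma Pop_one : (Pop 1 : Op A n) = 1 := by
  ext f g
  simp [Pop, Matrix.one_apply, eq_comm]

lemma Pop_mul_apply (σ : Equiv.Perm (Fin n)) (M : Op A n) (f g : Fin n → Fin n) :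
    ((Pop σ * M : Op A n) f g) = M (f ∘ ⇑σ) g := by
  rw [Matrix.mul_apply]
  simp only [Pop, ite_mul, one_mul, zero_mul]
  simp only [comp_eq_iff]
  rw [Finset.sum_ite_eq' Finset.univ (f ∘ ⇑σ)]
  simp

lemma mul_Pop_apply (M : Op A n) (σ : Equiv.Perm (Fin n)) (f g : Fin n → Fin n) :
    ((M * Pop σ : Op A n) f g) = M f (g ∘ ⇑σ⁻¹) := by
  rw [Matrix.mul_apply]
  simp only [Pop, mul_ite, mul_one, mul_zero]
  rw [Finset.sum_ite_eq' Finset.univ (g ∘ ⇑σ⁻¹)]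
  simp

lemma Pop_mul (σ τ : Equiv.Perm (Fin n)) : (Pop (σ * τ) : Op A n) = Pop σ * Pop τ := by
  ext f g
  rw [Pop_mul_apply]
  simp only [Pop, mul_inv_rev]
  refine if_congr ?_ rfl rfl
  constructor <;> intro h <;> funext t
  · simpa using congrFun h (σ t)
  · simpa using congrFun h (σ⁻¹ t)

def popHom : Equiv.Perm (Fin n) →* Op A n where
  toFun := Pop
  map_one' := Pop_one
  map_mul' := Pop_mul

lemma act_mul_Pop (C : Matrix (Fin n) (Fin n) A) (s : Fin n) (σ : Equiv.Perm (Fin n)) :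
    act C s * Pop σ = Pop σ * act C (σ⁻¹ s) := by
  ext f g
  rw [mul_Pop_apply, Pop_mul_apply]
  simp only [act]
  refine if_congr ?_ ?_ rfl
  · constructor
    · intro h t ht
      have := h (σ t) (fun hc => ht (by rw [← hc, Equiv.Perm.inv_def, Equiv.symm_apply_apply]))
      simpa using this
    · intro h t ht
      have := h (σ⁻¹ t) (fun hc => ht (by simpa using congrArg σ hc))
      simpa using this
  · simp

/-- The list [k, k+1, …, n−1] as elements of `Fin n`. -/
def Lk (n k : ℕ) : List (Fin n) := (List.finRange n).drop k

lemma mem_Lk {k : ℕ} {j : Fin n} (hj : j ∈ Lk n k) : k ≤ (j : ℕ) := by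
  rw [Lk, List.mem_iff_getElem] at hj
  obtain ⟨i, hi, rfl⟩ := hj
  simp [List.getElem_drop]

lemma Lk_zero : Lk n 0 = List.finRange n := rfl

lemma Lk_n : Lk n n = [] := by
  simp [Lk]

lemma Lk_cons {k : ℕ} (hk : k < n) : Lk n k = ⟨k, hk⟩ :: Lk n (k + 1) := by
  rw [Lk, Lk, List.drop_eq_getElem_cons (by simpa using hk)]
  simp

lemma filter_finRange (i : Fin n) :
    (List.finRange n).filter (fun j => decide (i ≤ j)) = Lk n (i : ℕ) := by
  have h1 : List.finRange n = (List.finRange n).take i ++ Lk n (i : ℕ) :=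
    (List.take_append_drop _ _).symm
  conv_lhs => rw [h1]
  rw [List.filter_append]
  have h2 : ((List.finRange n).take i).filter (fun j => decide (i ≤ j)) = [] := by
    rw [List.filter_eq_nil_iff]
    intro j hj
    rw [List.mem_iff_getElem] at hj
    obtain ⟨m, hm, rfl⟩ := hj
    simp only [List.length_take, lt_min_iff] at hm
    rw [List.getElem_take]
    simp only [decide_eq_true_eq, not_le, List.getElem_finRange, Fin.le_def, Fin.cast_mk]
    omega
  have h3 : (Lk n (i : ℕ)).filter (fun j => decide (i ≤ j)) = Lk n (i : ℕ) := by
    rw [List.filter_eq_self]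
    intro j hj
    rw [decide_eq_true_eq, Fin.le_def]
    exact mem_Lk hj
  rw [h2, h3, List.nil_append]

/-- forward product of swaps over `Lk n k`. -/
def fq (k : ℕ) (κ : Fin n → Fin n) : Equiv.Perm (Fin n) :=
  ((Lk n k).map (fun j => Equiv.swap j (κ j))).prod

lemma reverse_prod_eq_inv {G : Type*} [Group G] {ι : Type*} (l : List ι) (f : ι → G)
    (h : ∀ x, f x * f x = 1) : (l.reverse.map f).prod = ((l.map f).prod)⁻¹ := by
  induction l with
  | nil => simp
  | cons a l ih =>
      rw [List.reverse_cons, List.map_append, List.prod_append, ih, List.map_cons,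
        List.prod_cons, List.map_nil, List.prod_nil, mul_one, List.map_cons,
        List.prod_cons, mul_inv_rev, inv_eq_of_mul_eq_one_right (h a)]

lemma qk_eq (κ : Fin n → Fin n) (i : Fin n) : qk κ i = (fq (i : ℕ) κ)⁻¹ := by
  rw [qk, filter_finRange, fq]
  exact reverse_prod_eq_inv _ _ (fun x => Equiv.swap_mul_self _ _)

lemma Pij_prod (k : ℕ) (κ : Fin n → Fin n) :
    ((Lk n k).map (fun s => Pij s (κ s))).prod = (Pop (fq k κ) : Op A n) := by
  have := (map_list_prod (popHom (A := A) (n := n))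
    ((Lk n k).map (fun j => Equiv.swap j (κ j)))).symm
  rw [List.map_map] at this
  rw [fq]
  exact this.symm ▸ rfl

def betaC (k j : Fin n) : K :=
  if j = k then 1 else ((n : K) - 2 * u - 2 + ((k : ℕ) + 1 : K))⁻¹

lemma Piop_eq (k : Fin n) :
    (Piop k : Op A n) = ∑ j ∈ Finset.univ.filter (fun j => k ≤ j), betaC k j • Pij k j := by
  have hsplit : Finset.univ.filter (fun j => k ≤ j)
      = insert k (Finset.univ.filter (fun j => k < j)) := by
    ext j
    simp only [Finset.mem_insert, Finset.mem_filter, Finset.mem_univ, true_and]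
    constructor
    · intro h
      rcases eq_or_lt_of_le h with h' | h'
      · exact Or.inl h'.symm
      · exact Or.inr h'
    · rintro (rfl | h)
      · exact le_rfl
      · exact le_of_lt h
  rw [hsplit, Finset.sum_insert (by simp)]
  have h1 : betaC k k • (Pij k k : Op A n) = 1 := by
    rw [betaC, if_pos rfl, one_smul, Pij, Equiv.swap_self]
    exact Pop_one
  have h2 : ∀ j ∈ Finset.univ.filter (fun j => k < j), betaC k j • (Pij k j : Op A n)
      = -(((2 * u - ((k : ℕ) + 1 : K) - (n : K) + 2)⁻¹ : K) • Pij k j) := by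
    intro j hj
    have hjk : j ≠ k := by
      rw [Finset.mem_filter] at hj
      exact ne_of_gt hj.2
    rw [betaC, if_neg hjk, ← neg_smul]
    congr 1
    rw [show (n : K) - 2 * u - 2 + ((k : ℕ) + 1 : K)
        = -(2 * u - ((k : ℕ) + 1 : K) - (n : K) + 2) by ring, inv_neg]
  rw [Finset.sum_congr rfl h2, h1, Piop, Finset.smul_sum, sub_eq_add_neg,
    ← Finset.sum_neg_distrib]

lemma alphaK_update {k' j : Fin n} (κ : Fin n → Fin n) (hκ : κ k' = k') (hj : k' ≤ j) :
    alphaK (Function.update κ k' j) = betaC k' j * alphaK κ := by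
  rcases eq_or_lt_of_le hj with h | hlt
  · subst h
    have hup : Function.update κ k' k' = κ := by
      funext i
      by_cases h : i = k'
      · subst h; simp [hκ]
      · simp [Function.update_of_ne h]
    rw [betaC, if_pos rfl, one_mul, hup]
  · have hset : Finset.univ.filter (fun i => i < Function.update κ k' j i)
        = insert k' (Finset.univ.filter (fun i => i < κ i)) := by
      ext i
      simp only [Finset.mem_insert, Finset.mem_filter, Finset.mem_univ, true_and]
      by_cases hik : i = k'
      · subst hik
        simp [Function.update_self, hlt]
      · simp [Function.update_of_ne hik, hik]
    rw [alphaK, alphaK, hset, Finset.prod_insert (by simp [hκ]), betaC,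
      if_neg (ne_of_gt hlt)]

lemma fq_update_high {s k : ℕ} (hk : k < n) {κ : Fin n → Fin n} (j : Fin n) (hks : k < s) :
    fq s (Function.update κ ⟨k, hk⟩ j) = fq s κ := by
  rw [fq, fq]
  congr 1
  apply List.map_congr_left
  intro t ht
  have htk : t ≠ ⟨k, hk⟩ := by
    intro h
    have := mem_Lk ht
    rw [h] at this
    simp only [Fin.val_mk] at this
    omega
  rw [Function.update_of_ne htk]

lemma qk_update_high {k : ℕ} (hk : k < n) {κ : Fin n → Fin n} (j : Fin n) {s : Fin n}
    (hks : k < (s : ℕ)) : qk (Function.update κ ⟨k, hk⟩ j) s = qk κ s := by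
  rw [qk_eq, qk_eq, fq_update_high hk j hks]

lemma fq_cons {k : ℕ} (hk : k < n) (κ : Fin n → Fin n) :
    fq k κ = Equiv.swap ⟨k, hk⟩ (κ ⟨k, hk⟩) * fq (k + 1) κ := by
  rw [fq, fq, Lk_cons hk, List.map_cons, List.prod_cons]

def Jset (n k : ℕ) : Finset (Fin n → Fin n) :=
  Finset.univ.filter (fun κ => (∀ i, i ≤ κ i) ∧ ∀ i : Fin n, (i : ℕ) < k → κ i = i)

lemma Jset_n : Jset n n = {fun i => i} := by
  ext κ
  simp only [Jset, Finset.mem_filter, Finset.mem_univ, true_and, Finset.mem_singleton]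
  constructor
  · intro h
    funext i
    exact h.2 i i.isLt
  · rintro rfl
    exact ⟨fun i => le_rfl, fun i _ => rfl⟩

lemma Jset_zero : Jset n 0 = In n := by
  ext κ
  simp [Jset, In]

lemma alphaK_id : alphaK (n := n) (fun i => i) = 1 := by
  rw [alphaK]
  rw [Finset.filter_false_of_mem (fun i _ => lt_irrefl i), Finset.prod_empty]

lemma key (C : Fin n → Matrix (Fin n) (Fin n) A) :
    ∀ m k, k + m = n →
      ((Lk n k).map (fun s => act (C s) s * Piop s)).prod
        = ∑ κ ∈ Jset n k, alphaK κ •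
            ((Pop (fq k κ) : Op A n) *
              ((Lk n k).map (fun s => act (C s) (qk κ s s))).prod) := by
  intro m
  induction m with
  | zero =>
      intro k hk
      have hk' : k = n := by omega
      subst hk'
      rw [Jset_n, Finset.sum_singleton, alphaK_id, one_smul, Lk_n]
      rw [show fq (n := k) k (fun i => i) = 1 by rw [fq, Lk_n]; rfl, Pop_one]
      simp
  | succ m ih =>
      intro k hk
      have hkn : k < n := by omega
      have ih' := ih (k + 1) (by omega)
      set k' : Fin n := ⟨k, hkn⟩ with hk'def
      have hval : (k' : ℕ) = k := rfl
      have hterm : ∀ j : Fin n, k' ≤ j → ∀ κ : Fin n → Fin n, κ ∈ Jset n (k + 1) →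
          act (C k') k' * ((Pij k' j : Op A n) * (Pop (fq (k + 1) κ) *
              ((Lk n (k + 1)).map (fun s => act (C s) (qk κ s s))).prod))
            = Pop (fq k (Function.update κ k' j)) *
                ((Lk n k).map
                  (fun s => act (C s) (qk (Function.update κ k' j) s s))).prod := by
        intro j hj κ hκ
        set κ' := Function.update κ k' j with hκ'def
        have h1 : (Pij k' j : Op A n) * Pop (fq (k + 1) κ) = Pop (fq k κ') := by
          rw [Pij, ← Pop_mul]
          congr 1
          rw [fq_cons hkn κ', hκ'def, Function.update_self,
            fq_update_high hkn j (Nat.lt_succ_self k)]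
        have h2 : ((Lk n (k + 1)).map (fun s => act (C s) (qk κ s s))).prod
            = ((Lk n (k + 1)).map (fun s => act (C s) (qk κ' s s))).prod := by
          congr 1
          apply List.map_congr_left
          intro t ht
          rw [hκ'def, qk_update_high hkn j (lt_of_lt_of_le (Nat.lt_succ_self k) (mem_Lk ht))]
        have h3 : act (C k') k' * (Pop (fq k κ') : Op A n)
            = Pop (fq k κ') * act (C k') (qk κ' k' k') := by
          rw [act_mul_Pop]
          congr 2
          rw [qk_eq]
        calc act (C k') k' * ((Pij k' j : Op A n) * (Pop (fq (k + 1) κ) *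
                ((Lk n (k + 1)).map (fun s => act (C s) (qk κ s s))).prod))
            = act (C k') k' * (((Pij k' j : Op A n) * Pop (fq (k + 1) κ)) *
                ((Lk n (k + 1)).map (fun s => act (C s) (qk κ s s))).prod) := by
              rw [mul_assoc]
          _ = (act (C k') k' * (Pop (fq k κ') : Op A n)) *
                ((Lk n (k + 1)).map (fun s => act (C s) (qk κ' s s))).prod := by
              rw [h1, h2, mul_assoc]
          _ = Pop (fq k κ') * (act (C k') (qk κ' k' k') *
                ((Lk n (k + 1)).map (fun s => act (C s) (qk κ' s s))).prod) := by
              rw [h3, mul_assoc]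
          _ = Pop (fq k κ') *
                ((Lk n k).map (fun s => act (C s) (qk κ' s s))).prod := by
              rw [Lk_cons hkn, List.map_cons, List.prod_cons]
      rw [Lk_cons hkn, List.map_cons, List.prod_cons, ih', Piop_eq, Finset.mul_sum]
      have hsummand : ∀ κ ∈ Jset n (k + 1),
          (act (C k') k' * ∑ j ∈ Finset.univ.filter (fun j => k' ≤ j),
              betaC k' j • (Pij k' j : Op A n)) *
              (alphaK κ • ((Pop (fq (k + 1) κ) : Op A n) *
                  ((Lk n (k + 1)).map (fun s => act (C s) (qk κ s s))).prod))
            = ∑ j ∈ Finset.univ.filter (fun j => k' ≤ j),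
                alphaK (Function.update κ k' j) •
                  ((Pop (fq k (Function.update κ k' j)) : Op A n) *
                    ((Lk n k).map
                      (fun s => act (C s) (qk (Function.update κ k' j) s s))).prod) := by
        intro κ hκ
        have hκk : κ k' = k' := by
          simp only [Jset, Finset.mem_filter, Finset.mem_univ, true_and] at hκ
          exact hκ.2 k' (Nat.lt_succ_self k)
        rw [Finset.mul_sum, Finset.sum_mul]
        refine Finset.sum_congr rfl (fun j hj => ?_)
        have hjle : k' ≤ j := by
          rw [Finset.mem_filter] at hj
          exact hj.2
        rw [mul_smul_comm, mul_smul_comm, smul_mul_assoc, smul_smul,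
          mul_comm (alphaK κ) (betaC k' j), ← alphaK_update κ hκk hjle]
        congr 1
        rw [mul_assoc, hterm j hjle κ hκ]
      rw [Finset.sum_congr rfl hsummand, ← Finset.sum_product']
      refine Finset.sum_nbij' (fun p => Function.update p.1 k' p.2)
        (fun κ' => (Function.update κ' k' k', κ' k')) ?_ ?_ ?_ ?_ ?_
      · rintro ⟨κ, j⟩ hp
        simp only [Finset.mem_product, Finset.mem_filter, Finset.mem_univ, true_and,
          Jset] at hp ⊢
        obtain ⟨⟨hκ1, hκ2⟩, hj⟩ := hp
        refine ⟨fun i => ?_, fun i hi => ?_⟩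
        · by_cases hik : i = k'
          · subst hik
            rw [Function.update_self]
            exact hj
          · rw [Function.update_of_ne hik]
            exact hκ1 i
        · have hik : i ≠ k' := by
            intro h
            rw [h, hval] at hi
            omega
          rw [Function.update_of_ne hik]
          exact hκ2 i (by omega)
      · intro κ' hκ'
        simp only [Finset.mem_product, Finset.mem_filter, Finset.mem_univ, true_and,
          Jset] at hκ' ⊢
        obtain ⟨h1, h2⟩ := hκ'
        refine ⟨⟨fun i => ?_, fun i hi => ?_⟩, h1 k'⟩
        · by_cases hik : i = k'
          · subst hik
            rw [Function.update_self]
          · rw [Function.update_of_ne hik]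
            exact h1 i
        · by_cases hik : i = k'
          · subst hik
            rw [Function.update_self]
          · rw [Function.update_of_ne hik]
            have hne : (i : ℕ) ≠ k := fun h => hik (Fin.ext (h.trans hval.symm))
            exact h2 i (by omega)
      · rintro ⟨κ, j⟩ hp
        simp only [Finset.mem_product, Finset.mem_filter, Finset.mem_univ, true_and,
          Jset] at hp
        obtain ⟨⟨hκ1, hκ2⟩, hj⟩ := hp
        have hκk : κ k' = k' := hκ2 k' (Nat.lt_succ_self k)
        have hfst : Function.update (Function.update κ k' j) k' k' = κ := by
          funext i
          by_cases hik : i = k'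
          · subst hik
            rw [Function.update_self, hκk]
          · rw [Function.update_of_ne hik, Function.update_of_ne hik]
        have hsnd : Function.update κ k' j k' = j := by simp
        show (Function.update (Function.update κ k' j) k' k', Function.update κ k' j k')
            = (κ, j)
        rw [Prod.ext_iff]
        exact ⟨hfst, hsnd⟩
      · intro κ' hκ'
        simp only [Jset, Finset.mem_filter, Finset.mem_univ, true_and] at hκ'
        show Function.update (Function.update κ' k' k') k' (κ' k') = κ'
        funext i
        by_cases hik : i = k'
        · subst hik
          rw [Function.update_self]
        · rw [Function.update_of_ne hik, Function.update_of_ne hik]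
      · rintro ⟨κ, j⟩ hp
        simp only [Lk_cons hkn]

theorem braket_eq_sum_qk (hn : 1 ≤ n) (C : Fin n → Matrix (Fin n) (Fin n) A) :
    braket C =
      ∑ κ ∈ In n, alphaK κ •
        (((List.finRange n).map (fun s => Pij s (κ s))).prod *
          ((List.finRange n).map (fun s => act (C s) (qk κ s s))).prod) := by
  have h := key C n 0 (by omega)
  rw [braket, show (List.finRange n) = Lk n 0 from rfl, h, Jset_zero]
  refine Finset.sum_congr rfl (fun κ hκ => ?_)
  rw [Pij_prod 0 κ]

end
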